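/- arXiv:2206.14610 — 3 statements merged into one kernel-verified Lean document; each statement's English description precedes it below -/
import Mathlib

section
/- Let d ≥ 1 be an integer, μ > 0 and λ ∈ ℝ with 2μ + dλ > 0, and write ‖τ‖_𝒞 = ⟨𝒞τ, τ⟩^{1/2} and ‖σ‖_𝒜 = ⟨𝒜σ, σ⟩^{1/2}. Let S be a symmetric and W a skew-symmetric d×d real matrix. Then: (i) for every d×d real matrix τ, ⟨τ, S + W⟩ ≤ ‖τ‖_𝒞 · (‖S‖_𝒜² + ‖W‖_𝒜²)^{1/2}; (ii) the matrix τ₀ = 𝒜S + 𝒜W satisfies ⟨τ₀, S + W⟩ = ‖S‖_𝒜² + ‖W‖_𝒜² and ‖τ₀‖_𝒞 = (‖S‖_𝒜² + ‖W‖_𝒜²)^{1/2}, so the bound in (i) is attained; (iii) consequently the supremum of ⟨τ, S+W⟩/‖τ‖_𝒞 over nonzero τ equals (‖S‖_𝒜² + ‖W‖_𝒜²)^{1/2}, which lies between (1/√2)(‖S‖_𝒜 + ‖W‖_𝒜) and ‖S‖_𝒜 + ‖W‖_𝒜. -/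
open Matrix BigOperators

/-- Frobenius inner product on d×d real matrices. -/
noncomputable def frob {d : ℕ} (σ τ : Matrix (Fin d) (Fin d) ℝ) : ℝ :=
  ∑ i, ∑ j, σ i j * τ i j

/-- The compliance operator 𝒞τ = (1/(2μ))(τ − (λ/(2μ + dλ)) tr(τ) I). -/
noncomputable def compl (d : ℕ) (μ lam : ℝ) (τ : Matrix (Fin d) (Fin d) ℝ) :
    Matrix (Fin d) (Fin d) ℝ :=
  (1 / (2 * μ)) • (τ - ((lam / (2 * μ + d * lam)) * τ.trace) • (1 : Matrix (Fin d) (Fin d) ℝ))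

/-- The elasticity operator 𝒜τ = 2μτ + λ tr(τ) I. -/
noncomputable def elas (d : ℕ) (μ lam : ℝ) (τ : Matrix (Fin d) (Fin d) ℝ) :
    Matrix (Fin d) (Fin d) ℝ :=
  (2 * μ) • τ + (lam * τ.trace) • (1 : Matrix (Fin d) (Fin d) ℝ)

/-- The compliance norm ‖τ‖_𝒞 = (𝒞τ, τ)^{1/2}. -/
noncomputable def cnorm (d : ℕ) (μ lam : ℝ) (τ : Matrix (Fin d) (Fin d) ℝ) : ℝ :=
  Real.sqrt (frob (compl d μ lam τ) τ)

/-- The elasticity norm ‖σ‖_𝒜 = (𝒜σ, σ)^{1/2}. -/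
noncomputable def anorm (d : ℕ) (μ lam : ℝ) (σ : Matrix (Fin d) (Fin d) ℝ) : ℝ :=
  Real.sqrt (frob (elas d μ lam σ) σ)

section Aux

variable {d : ℕ}

lemma frob_comm (σ τ : Matrix (Fin d) (Fin d) ℝ) : frob σ τ = frob τ σ := by
  unfold frob
  exact Finset.sum_congr rfl fun i _ => Finset.sum_congr rfl fun j _ => mul_comm _ _

lemma frob_add_left (σ₁ σ₂ τ : Matrix (Fin d) (Fin d) ℝ) :
    frob (σ₁ + σ₂) τ = frob σ₁ τ + frob σ₂ τ := by
  unfold frob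
  simp [Matrix.add_apply, add_mul, Finset.sum_add_distrib]

lemma frob_add_right (σ τ₁ τ₂ : Matrix (Fin d) (Fin d) ℝ) :
    frob σ (τ₁ + τ₂) = frob σ τ₁ + frob σ τ₂ := by
  rw [frob_comm, frob_add_left, frob_comm τ₁, frob_comm τ₂]

lemma frob_smul_left (c : ℝ) (σ τ : Matrix (Fin d) (Fin d) ℝ) :
    frob (c • σ) τ = c * frob σ τ := by
  unfold frob
  simp [Matrix.smul_apply, Finset.mul_sum, mul_assoc]

lemma frob_smul_right (c : ℝ) (σ τ : Matrix (Fin d) (Fin d) ℝ) :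
    frob σ (c • τ) = c * frob σ τ := by
  rw [frob_comm, frob_smul_left, frob_comm]

lemma frob_sub_left (σ₁ σ₂ τ : Matrix (Fin d) (Fin d) ℝ) :
    frob (σ₁ - σ₂) τ = frob σ₁ τ - frob σ₂ τ := by
  unfold frob
  simp [Matrix.sub_apply, sub_mul, Finset.sum_sub_distrib]

lemma frob_one_left (τ : Matrix (Fin d) (Fin d) ℝ) :
    frob (1 : Matrix (Fin d) (Fin d) ℝ) τ = τ.trace := by
  unfold frob
  simp [Matrix.one_apply, Matrix.trace, Matrix.diag]

lemma frob_transpose (σ τ : Matrix (Fin d) (Fin d) ℝ) : frob σᵀ τᵀ = frob σ τ := by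
  unfold frob
  rw [Finset.sum_comm]
  simp [Matrix.transpose_apply]

lemma frob_self_nonneg (τ : Matrix (Fin d) (Fin d) ℝ) : 0 ≤ frob τ τ :=
  Finset.sum_nonneg fun i _ => Finset.sum_nonneg fun j _ => mul_self_nonneg _

lemma frob_self_pos {τ : Matrix (Fin d) (Fin d) ℝ} (h : τ ≠ 0) : 0 < frob τ τ := by
  rcases (frob_self_nonneg τ).lt_or_eq with h' | h'
  · exact h'
  · exfalso; apply h
    ext i j
    have h1 : ∀ i ∈ Finset.univ, (0:ℝ) ≤ ∑ j, τ i j * τ i j :=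
      fun i _ => Finset.sum_nonneg fun j _ => mul_self_nonneg _
    have h2 := (Finset.sum_eq_zero_iff_of_nonneg h1).1 h'.symm i (Finset.mem_univ i)
    have h3 := (Finset.sum_eq_zero_iff_of_nonneg
      (fun j _ => mul_self_nonneg (τ i j))).1 h2 j (Finset.mem_univ j)
    have := mul_self_eq_zero.1 h3
    simpa using this

lemma trace_sq_le (τ : Matrix (Fin d) (Fin d) ℝ) :
    τ.trace ^ 2 ≤ (d : ℝ) * frob τ τ := by
  have h1 : τ.trace ^ 2 ≤ (d : ℝ) * ∑ i, τ i i ^ 2 := by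
    have := sq_sum_le_card_mul_sum_sq (s := (Finset.univ : Finset (Fin d)))
      (f := fun i => τ i i)
    simpa [Matrix.trace, Matrix.diag] using this
  refine h1.trans (mul_le_mul_of_nonneg_left ?_ (Nat.cast_nonneg d))
  unfold frob
  refine Finset.sum_le_sum fun i _ => ?_
  have : τ i i * τ i i ≤ ∑ j, τ i j * τ i j :=
    Finset.single_le_sum (fun j _ => mul_self_nonneg (τ i j)) (Finset.mem_univ i)
  simpa [sq] using this

variable (d) in
lemma frob_compl_eq (μ lam : ℝ) (τ ρ : Matrix (Fin d) (Fin d) ℝ) :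
    frob (compl d μ lam τ) ρ =
      (1 / (2 * μ)) * (frob τ ρ - lam / (2 * μ + d * lam) * τ.trace * ρ.trace) := by
  unfold _root_.compl
  rw [frob_smul_left, frob_sub_left, frob_smul_left, frob_one_left]

variable (d) in
lemma frob_elas_eq (μ lam : ℝ) (σ ρ : Matrix (Fin d) (Fin d) ℝ) :
    frob (elas d μ lam σ) ρ = 2 * μ * frob σ ρ + lam * σ.trace * ρ.trace := by
  unfold elas
  rw [frob_add_left, frob_smul_left, frob_smul_left, frob_one_left]

lemma frob_compl_comm (μ lam : ℝ) (τ ρ : Matrix (Fin d) (Fin d) ℝ) :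
    frob (compl d μ lam τ) ρ = frob (compl d μ lam ρ) τ := by
  rw [frob_compl_eq, frob_compl_eq, frob_comm]
  ring

lemma qC_nonneg {μ lam : ℝ} (hμ : 0 < μ) (hlam : 0 < 2 * μ + d * lam)
    (τ : Matrix (Fin d) (Fin d) ℝ) : 0 ≤ frob (compl d μ lam τ) τ := by
  rw [frob_compl_eq]
  have hF := frob_self_nonneg τ
  have hT := trace_sq_le τ
  have hT0 : (0:ℝ) ≤ τ.trace ^ 2 := sq_nonneg _
  have key : 0 ≤ (2 * μ + d * lam) * frob τ τ - lam * τ.trace ^ 2 := by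
    rcases le_or_gt 0 lam with h | h
    · nlinarith
    · nlinarith
  have heq : (1 / (2 * μ)) * (frob τ τ - lam / (2 * μ + d * lam) * τ.trace * τ.trace) =
      ((2 * μ + d * lam) * frob τ τ - lam * τ.trace ^ 2) / (2 * μ * (2 * μ + d * lam)) := by
    generalize 2 * μ + d * lam = X at *
    field_simp
  rw [heq]
  exact div_nonneg key (by positivity)

lemma qC_pos {μ lam : ℝ} (hμ : 0 < μ) (hlam : 0 < 2 * μ + d * lam)
    {τ : Matrix (Fin d) (Fin d) ℝ} (hτ : τ ≠ 0) : 0 < frob (compl d μ lam τ) τ := by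
  rw [frob_compl_eq]
  have hF := frob_self_pos hτ
  have hT := trace_sq_le τ
  have hT0 : (0:ℝ) ≤ τ.trace ^ 2 := sq_nonneg _
  have key : 0 < (2 * μ + d * lam) * frob τ τ - lam * τ.trace ^ 2 := by
    rcases le_or_gt 0 lam with h | h
    · nlinarith
    · nlinarith
  have heq : (1 / (2 * μ)) * (frob τ τ - lam / (2 * μ + d * lam) * τ.trace * τ.trace) =
      ((2 * μ + d * lam) * frob τ τ - lam * τ.trace ^ 2) / (2 * μ * (2 * μ + d * lam)) := by
    generalize 2 * μ + d * lam = X at *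
    field_simp
  rw [heq]
  exact div_pos key (by positivity)

lemma qA_nonneg {μ lam : ℝ} (hμ : 0 < μ) (hlam : 0 < 2 * μ + d * lam)
    (σ : Matrix (Fin d) (Fin d) ℝ) : 0 ≤ frob (elas d μ lam σ) σ := by
  rw [frob_elas_eq]
  have hF := frob_self_nonneg σ
  have hT := trace_sq_le σ
  have hT0 : (0:ℝ) ≤ σ.trace ^ 2 := sq_nonneg _
  rcases le_or_gt 0 lam with h | h
  · nlinarith
  · nlinarith

end Aux

/-- Pointwise Babuška–Brezzi duality identity: the supremum of ⟨τ, S+W⟩/‖τ‖_𝒞 over nonzero τ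
equals (‖S‖_𝒜² + ‖W‖_𝒜²)^{1/2}, the bound being attained at τ₀ = 𝒜S + 𝒜W. -/
theorem babuska_brezzi_duality (d : ℕ) (hd : 1 ≤ d) (μ lam : ℝ) (hμ : 0 < μ)
    (hlam : 0 < 2 * μ + d * lam) (S W : Matrix (Fin d) (Fin d) ℝ)
    (hS : Sᵀ = S) (hW : Wᵀ = -W) :
    (∀ τ : Matrix (Fin d) (Fin d) ℝ,
      frob τ (S + W) ≤
        cnorm d μ lam τ * Real.sqrt (frob (elas d μ lam S) S + frob (elas d μ lam W) W)) ∧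
    (frob (elas d μ lam S + elas d μ lam W) (S + W) =
        frob (elas d μ lam S) S + frob (elas d μ lam W) W ∧
      cnorm d μ lam (elas d μ lam S + elas d μ lam W) =
        Real.sqrt (frob (elas d μ lam S) S + frob (elas d μ lam W) W)) ∧
    IsLUB {r : ℝ | ∃ τ : Matrix (Fin d) (Fin d) ℝ, τ ≠ 0 ∧ r = frob τ (S + W) / cnorm d μ lam τ}
      (Real.sqrt (frob (elas d μ lam S) S + frob (elas d μ lam W) W)) ∧
    (1 / Real.sqrt 2) * (anorm d μ lam S + anorm d μ lam W) ≤
      Real.sqrt (frob (elas d μ lam S) S + frob (elas d μ lam W) W) ∧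
    Real.sqrt (frob (elas d μ lam S) S + frob (elas d μ lam W) W) ≤
      anorm d μ lam S + anorm d μ lam W := by
  have hμ2 : (2 : ℝ) * μ ≠ 0 := by positivity
  have hdl : (2 : ℝ) * μ + d * lam ≠ 0 := ne_of_gt hlam
  -- trace of W is zero
  have htrW : W.trace = 0 := by
    have h1 : Wᵀ.trace = W.trace := Matrix.trace_transpose W
    rw [hW, Matrix.trace_neg] at h1
    linarith
  -- frob S W = 0
  have hSW : frob S W = 0 := by
    have h1 : frob Sᵀ Wᵀ = frob S W := frob_transpose S W
    rw [hS, hW] at h1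
    have h2 : frob S (-W) = -frob S W := by
      have := frob_smul_right (-1 : ℝ) S W
      simpa using this
    rw [h2] at h1
    linarith
  set qS := frob (elas d μ lam S) S with hqS
  set qW := frob (elas d μ lam W) W with hqW
  set M2 := qS + qW with hM2
  set τ₀ := elas d μ lam S + elas d μ lam W with hτ₀
  have hqSnn : 0 ≤ qS := qA_nonneg hμ hlam S
  have hqWnn : 0 ≤ qW := qA_nonneg hμ hlam W
  have hM2nn : 0 ≤ M2 := add_nonneg hqSnn hqWnn
  -- cross terms vanish
  have hES_W : frob (elas d μ lam S) W = 0 := by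
    rw [frob_elas_eq, hSW, htrW]; ring
  have hEW_S : frob (elas d μ lam W) S = 0 := by
    rw [frob_elas_eq, htrW, frob_comm, hSW]; ring
  -- part (ii) first
  have hii1 : frob τ₀ (S + W) = M2 := by
    rw [hτ₀, frob_add_left, frob_add_right, frob_add_right, hES_W, hEW_S, hM2]
    ring
  -- key: frob (compl τ₀) ρ = frob (S+W) ρ
  have hkey : ∀ ρ : Matrix (Fin d) (Fin d) ℝ,
      frob (compl d μ lam τ₀) ρ = frob (S + W) ρ := by
    intro ρ
    have htr0 : τ₀.trace = (2 * μ + d * lam) * S.trace := by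
      rw [hτ₀, Matrix.trace_add]
      unfold elas
      simp [Matrix.trace_add, Matrix.trace_smul, Matrix.trace_one, htrW, smul_eq_mul]
      ring
    have hfr0 : frob τ₀ ρ = 2 * μ * frob S ρ + lam * S.trace * ρ.trace + 2 * μ * frob W ρ := by
      rw [hτ₀, frob_add_left, frob_elas_eq, frob_elas_eq, htrW]
      ring
    rw [frob_compl_eq, hfr0, htr0, frob_add_left]
    generalize 2 * μ + d * lam = X at *
    field_simp
    ring
  -- qC τ₀ = M2
  have hqC0 : frob (compl d μ lam τ₀) τ₀ = M2 := by
    rw [hkey τ₀, frob_comm, hii1]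
  -- part (i)
  have hi : ∀ τ : Matrix (Fin d) (Fin d) ℝ,
      frob τ (S + W) ≤ cnorm d μ lam τ * Real.sqrt M2 := by
    intro τ
    set B := frob τ (S + W) with hB
    set qτ := frob (compl d μ lam τ) τ with hqτ
    have hqτnn : 0 ≤ qτ := qC_nonneg hμ hlam τ
    have hBC : frob (compl d μ lam τ) τ₀ = B := by
      rw [frob_compl_comm, hkey τ, frob_comm]
    -- quadratic nonneg
    have hquad : ∀ t : ℝ, 0 ≤ M2 * (t * t) + (2 * B) * t + qτ := by
      intro t
      have h0 := qC_nonneg hμ hlam (τ + t • τ₀)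
      have hexp : frob (compl d μ lam (τ + t • τ₀)) (τ + t • τ₀) =
          M2 * (t * t) + (2 * B) * t + qτ := by
        rw [frob_compl_eq]
        rw [frob_add_left, frob_add_right, frob_add_right, frob_smul_left,
          frob_smul_left, frob_smul_right, frob_smul_right,
          Matrix.trace_add, Matrix.trace_smul]
        have e1 : qτ = (1 / (2 * μ)) *
            (frob τ τ - lam / (2 * μ + d * lam) * τ.trace * τ.trace) := by
          rw [hqτ, frob_compl_eq]
        have e2 : B = (1 / (2 * μ)) *
            (frob τ τ₀ - lam / (2 * μ + d * lam) * τ.trace * τ₀.trace) := by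
          rw [← hBC, frob_compl_eq]
        have e3 : M2 = (1 / (2 * μ)) *
            (frob τ₀ τ₀ - lam / (2 * μ + d * lam) * τ₀.trace * τ₀.trace) := by
          rw [← hqC0, frob_compl_eq]
        have e4 : frob τ₀ τ = frob τ τ₀ := frob_comm _ _
        rw [e1, e2, e3, e4]
        simp only [smul_eq_mul]
        ring
      rw [hexp] at h0
      exact h0
    have hdisc := discrim_le_zero hquad
    rw [discrim] at hdisc
    have hB2 : B ^ 2 ≤ qτ * M2 := by nlinarith
    calc B ≤ |B| := le_abs_self B
    _ = Real.sqrt (B ^ 2) := (Real.sqrt_sq_eq_abs B).symm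
    _ ≤ Real.sqrt (qτ * M2) := Real.sqrt_le_sqrt hB2
    _ = Real.sqrt qτ * Real.sqrt M2 := Real.sqrt_mul hqτnn M2
    _ = cnorm d μ lam τ * Real.sqrt M2 := rfl
  -- part (ii) second
  have hii2 : cnorm d μ lam τ₀ = Real.sqrt M2 := by
    unfold cnorm
    rw [hqC0]
  refine ⟨hi, ⟨hii1, hii2⟩, ?_, ?_, ?_⟩
  · -- IsLUB
    constructor
    · rintro r ⟨τ, hτ, rfl⟩
      have hc : 0 < cnorm d μ lam τ := Real.sqrt_pos.2 (qC_pos hμ hlam hτ)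
      rw [div_le_iff₀ hc]
      calc frob τ (S + W) ≤ cnorm d μ lam τ * Real.sqrt M2 := hi τ
      _ = Real.sqrt M2 * cnorm d μ lam τ := mul_comm _ _
    · intro b hb
      by_cases h0 : τ₀ = 0
      · -- then S + W = 0, M2 = 0, use τ = 1
        have hf0 : frob (0 : Matrix (Fin d) (Fin d) ℝ) (S + W) = 0 := by
          unfold frob; simp
        have hcz : frob (S + W) (S + W) = 0 := by
          rw [← hkey (S + W), h0, frob_compl_eq, hf0]
          simp
        have hSW0 : S + W = 0 := by
          by_contra hne
          exact absurd hcz (ne_of_gt (frob_self_pos hne))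
        have hM20 : M2 = 0 := by rw [← hii1, hSW0, h0]; unfold frob; simp
        have h1ne : (1 : Matrix (Fin d) (Fin d) ℝ) ≠ 0 := by
          intro h
          have := congrFun (congrFun h ⟨0, hd⟩) ⟨0, hd⟩
          simp [Matrix.one_apply] at this
        have hmem : (0:ℝ) ∈ {r : ℝ | ∃ τ : Matrix (Fin d) (Fin d) ℝ,
            τ ≠ 0 ∧ r = frob τ (S + W) / cnorm d μ lam τ} := by
          refine ⟨1, h1ne, ?_⟩
          rw [hSW0]
          have : frob (1 : Matrix (Fin d) (Fin d) ℝ) 0 = 0 := by unfold frob; simp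
          rw [this, zero_div]
        have := hb hmem
        rw [hM20, Real.sqrt_zero]
        exact this
      · have hM2pos : 0 < M2 := by rw [← hqC0]; exact qC_pos hμ hlam h0
        have hmem : Real.sqrt M2 ∈ {r : ℝ | ∃ τ : Matrix (Fin d) (Fin d) ℝ,
            τ ≠ 0 ∧ r = frob τ (S + W) / cnorm d μ lam τ} := by
          refine ⟨τ₀, h0, ?_⟩
          rw [hii1, hii2]
          rw [eq_div_iff (ne_of_gt (Real.sqrt_pos.2 hM2pos))]
          exact Real.mul_self_sqrt hM2nn
        exact hb hmem
  · -- lower bound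
    set a := anorm d μ lam S with ha
    set b := anorm d μ lam W with hbb
    have han : 0 ≤ a := Real.sqrt_nonneg _
    have hbn : 0 ≤ b := Real.sqrt_nonneg _
    have ha2 : a ^ 2 = qS := Real.sq_sqrt hqSnn
    have hb2 : b ^ 2 = qW := Real.sq_sqrt hqWnn
    have hs2 : (0:ℝ) < Real.sqrt 2 := Real.sqrt_pos.2 (by norm_num)
    rw [Real.le_sqrt (by positivity)]
    have h22 : Real.sqrt 2 ^ 2 = 2 := Real.sq_sqrt (by norm_num)
    have hexp : (1 / Real.sqrt 2 * (a + b)) ^ 2 = (a + b) ^ 2 / 2 := by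
      field_simp
      rw [h22]; ring
    rw [hexp]
    nlinarith [sq_nonneg (a - b)]
    exact hM2nn
  · -- upper bound
    set a := anorm d μ lam S with ha
    set b := anorm d μ lam W with hbb
    have han : 0 ≤ a := Real.sqrt_nonneg _
    have hbn : 0 ≤ b := Real.sqrt_nonneg _
    have ha2 : a ^ 2 = qS := Real.sq_sqrt hqSnn
    have hb2 : b ^ 2 = qW := Real.sq_sqrt hqWnn
    calc Real.sqrt M2 ≤ Real.sqrt ((a + b) ^ 2) := by
          apply Real.sqrt_le_sqrt
          nlinarith [mul_nonneg han hbn]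
    _ = a + b := Real.sqrt_sq (by positivity)
end

section
/- Let X and Y be real Hilbert spaces and let T : Y → X be a linear isometry. Define the bilinear form B((σ,x),(τ,y)) = ⟨σ, τ⟩_X + ⟨T x, τ⟩_X − ⟨σ, T y⟩_X on (X × Y) × (X × Y). Then for every (σ, x) ∈ X × Y there exists (τ, y) ∈ X × Y, with (τ, y) ≠ (0,0) whenever (σ, x) ≠ (0,0), such that B((σ,x),(τ,y)) ≥ ((√5 − 1)/2) · (‖σ‖² + ‖x‖²)^{1/2} · (‖τ‖² + ‖y‖²)^{1/2}. In other words, the twisted saddle-point form B satisfies the inf-sup condition with the explicit constant (√5 − 1)/2 (the inverse golden ratio) with respect to the norm ‖(σ,x)‖ = (‖σ‖² + ‖x‖²)^{1/2}. -/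
set_option maxHeartbeats 800000

lemma key_scalar_ineq (s a t r : ℝ) (hs : s^2 = 5) (hs' : 0 ≤ s) (ha : 0 ≤ a) (ht : 0 ≤ t)
    (hr : r ≤ a) :
    (3-s)/2 * (a^2+t^2) ≤ a^2 + (t-r)^2 := by
  have hs2 : 2 ≤ s := by nlinarith
  rcases le_total t a with h | h
  · nlinarith [sq_nonneg (t-r), mul_nonneg (sub_nonneg.2 hs2) (sq_nonneg t)]
  · have h1 : (3-s)/2 * (a^2+t^2) ≤ a^2 + (t-a)^2 := by
      nlinarith [sq_nonneg ((s-1)*t - 2*a)]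
    have h2 : (t-a)^2 ≤ (t-r)^2 := by
      nlinarith [mul_nonneg (sub_nonneg.2 h) (sub_nonneg.2 hr), sq_nonneg (a-r)]
    linarith

lemma key_scalar_ineq2 (s a t r p : ℝ) (hs : s^2 = 5) (hs' : 0 ≤ s) (ha : 0 ≤ a)
    (ht : 0 ≤ t) (hr : r ≤ a) (hp : -(r*t) ≤ p) :
    (3-s)/2 * (a^2+t^2) ≤ a^2 + 2*p + t^2 + r^2 := by
  have := key_scalar_ineq s a t r hs hs' ha ht hr
  nlinarith

/-- Abstract stability theorem for the elasticity saddle-point problem: the twisted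
saddle-point form B((σ,x),(τ,y)) = ⟨σ,τ⟩ + ⟨Tx,τ⟩ − ⟨σ,Ty⟩ built from a linear isometry
T : Y → X between real Hilbert spaces satisfies the inf-sup condition with constant
(√5 − 1)/2. -/
theorem saddle_point_inf_sup (X Y : Type*)
    [NormedAddCommGroup X] [InnerProductSpace ℝ X] [CompleteSpace X]
    [NormedAddCommGroup Y] [InnerProductSpace ℝ Y] [CompleteSpace Y]
    (T : Y →ₗᵢ[ℝ] X) (σ : X) (x : Y) :
    ∃ τ : X, ∃ y : Y,
      ((σ, x) ≠ (0, 0) → (τ, y) ≠ (0, 0)) ∧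
      (inner ℝ σ τ + inner ℝ (T x) τ - inner ℝ σ (T y) : ℝ) ≥
        ((Real.sqrt 5 - 1) / 2) * Real.sqrt (‖σ‖ ^ 2 + ‖x‖ ^ 2) *
          Real.sqrt (‖τ‖ ^ 2 + ‖y‖ ^ 2) := by
  set A := ContinuousLinearMap.adjoint T.toContinuousLinearMap with hAdef
  have hadj : ∀ z : Y, (inner ℝ σ (T z) : ℝ) = inner ℝ (A σ) z := by
    intro z
    rw [hAdef, ContinuousLinearMap.adjoint_inner_left]
    simp
  have hr : ‖A σ‖ ≤ ‖σ‖ := by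
    have h1 : ‖A σ‖^2 = inner ℝ σ (T (A σ)) := by
      rw [hadj]; exact (real_inner_self_eq_norm_sq _).symm
    have h2 : (inner ℝ σ (T (A σ)) : ℝ) ≤ ‖σ‖ * ‖T (A σ)‖ := real_inner_le_norm _ _
    rw [T.norm_map] at h2
    nlinarith [norm_nonneg (A σ), norm_nonneg σ]
  refine ⟨σ + T x, -(A σ), ?_, ?_⟩
  · -- nonvanishing
    intro hσx hτy
    apply hσx
    have hτ : σ + T x = 0 := congrArg Prod.fst hτy
    have hy : -(A σ) = 0 := congrArg Prod.snd hτy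
    have hA0 : A σ = 0 := by simpa using hy
    have hσ : σ = -(T x) := by
      have := hτ; rwa [add_eq_zero_iff_eq_neg] at this
    have hx2 : ‖x‖^2 = 0 := by
      have h1 : (inner ℝ σ (T x) : ℝ) = 0 := by rw [hadj, hA0, inner_zero_left]
      have h2 : (inner ℝ σ (T x) : ℝ) = -‖x‖^2 := by
        rw [hσ, inner_neg_left, real_inner_self_eq_norm_sq, T.norm_map]
      rw [h2] at h1; linarith
    have hx : x = 0 := by
      have := pow_eq_zero_iff (n := 2) (by norm_num) |>.mp hx2
      exact norm_eq_zero.mp this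
    have hσ0 : σ = 0 := by rw [hσ, hx, map_zero, neg_zero]
    rw [hσ0, hx]
  · -- main inequality
    have hB : (inner ℝ σ (σ + T x) + inner ℝ (T x) (σ + T x)
        - inner ℝ σ (T (-(A σ))) : ℝ) = ‖σ + T x‖^2 + ‖A σ‖^2 := by
      have e1 : (inner ℝ σ (σ + T x) + inner ℝ (T x) (σ + T x) : ℝ)
          = inner ℝ (σ + T x) (σ + T x) := by rw [inner_add_left]
      have e2 : (inner ℝ σ (T (-(A σ))) : ℝ) = -‖A σ‖^2 := by
        rw [map_neg, inner_neg_right, hadj, real_inner_self_eq_norm_sq]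
      rw [e1, e2, real_inner_self_eq_norm_sq]; ring
    rw [ge_iff_le, hB]
    have ha : (0:ℝ) ≤ ‖σ‖ := norm_nonneg _
    have ht : (0:ℝ) ≤ ‖x‖ := norm_nonneg _
    have hr0 : (0:ℝ) ≤ ‖A σ‖ := norm_nonneg _
    have hs : Real.sqrt 5 ^ 2 = 5 := Real.sq_sqrt (by norm_num)
    have hs' : 0 ≤ Real.sqrt 5 := Real.sqrt_nonneg 5
    have hp : -(‖A σ‖ * ‖x‖) ≤ (inner ℝ σ (T x) : ℝ) := by
      rw [hadj]
      have := abs_real_inner_le_norm (A σ) x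
      cases' abs_le.mp this with h1 _
      linarith
    have hnorm : ‖σ + T x‖^2 = ‖σ‖^2 + 2 * (inner ℝ σ (T x) : ℝ) + ‖x‖^2 := by
      rw [norm_add_sq_real, T.norm_map]
    have hCkey : (3 - Real.sqrt 5)/2 * (‖σ‖^2 + ‖x‖^2) ≤ ‖σ + T x‖^2 + ‖A σ‖^2 := by
      rw [hnorm]
      exact key_scalar_ineq2 (Real.sqrt 5) ‖σ‖ ‖x‖ ‖A σ‖ (inner ℝ σ (T x)) hs hs' ha ht hr hp
    have hC0 : (0:ℝ) ≤ ‖σ + T x‖^2 + ‖A σ‖^2 := by positivity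
    have hγsq : ((Real.sqrt 5 - 1)/2)^2 = (3 - Real.sqrt 5)/2 := by nlinarith
    have hγ0 : 0 ≤ (Real.sqrt 5 - 1)/2 := by nlinarith
    have hN : ‖σ + T x‖^2 + ‖-(A σ)‖^2 = ‖σ + T x‖^2 + ‖A σ‖^2 := by rw [norm_neg]
    rw [hN]
    set C := ‖σ + T x‖^2 + ‖A σ‖^2 with hCdef
    set M2 := ‖σ‖^2 + ‖x‖^2 with hM2def
    have hM20 : (0:ℝ) ≤ M2 := by positivity
    have hM : Real.sqrt M2 ^ 2 = M2 := Real.sq_sqrt hM20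
    have hSC : Real.sqrt C ^ 2 = C := Real.sq_sqrt hC0
    have hγM : (Real.sqrt 5 - 1)/2 * Real.sqrt M2 ≤ Real.sqrt C := by
      have h1 : ((Real.sqrt 5 - 1)/2 * Real.sqrt M2)^2 ≤ C := by
        rw [mul_pow, hγsq, hM]; exact hCkey
      nlinarith [Real.sqrt_nonneg C, Real.sqrt_nonneg M2,
        mul_nonneg hγ0 (Real.sqrt_nonneg M2)]
    calc (Real.sqrt 5 - 1)/2 * Real.sqrt M2 * Real.sqrt C
        ≤ Real.sqrt C * Real.sqrt C :=
          mul_le_mul_of_nonneg_right hγM (Real.sqrt_nonneg C)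
      _ = C := by rw [← sq]; exact hSC
end

section
/- Let p₀, p₁, p₂, p₃ ∈ ℝ³ be affinely independent points (an affine basis of ℝ³), let λ_l : ℝ³ → ℝ (l = 0,…,3) be the associated barycentric coordinate functions (affine maps with λ_l(p_m) = δ_{lm} and Σ_l λ_l ≡ 1), and let g_l ∈ ℝ³ be the constant gradient of λ_l, i.e. the unique vector with λ_l(x + v) = λ_l(x) + ⟨g_l, v⟩ for all x, v ∈ ℝ³. Define the matrix-valued bubble function b_K(x) = Σ_{l=0}^{3} (Π_{m ≠ l} λ_m(x)) g_l g_lᵀ. Then for every x in the closed tetrahedron K = convexHull{p₀,p₁,p₂,p₃} the matrix b_K(x) is symmetric positive semidefinite, and for every x in the interior of K the matrix b_K(x) is positive definite: wᵀ b_K(x) w > 0 for all nonzero w ∈ ℝ³. -/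
open Matrix BigOperators

/-- The matrix-valued bubble function on a tetrahedron is positive semidefinite on the
closed tetrahedron and positive definite in its interior. -/
theorem tetrahedron_matrix_bubble_posdef
    (p : Fin 4 → EuclideanSpace ℝ (Fin 3)) (hp : AffineIndependent ℝ p)
    (lam : Fin 4 → EuclideanSpace ℝ (Fin 3) → ℝ)
    (g : Fin 4 → EuclideanSpace ℝ (Fin 3))
    (hinterp : ∀ l m, lam l (p m) = if l = m then 1 else 0)
    (hsum : ∀ x, ∑ l, lam l x = 1)
    (hgrad : ∀ l x v, lam l (x + v) = lam l x + (inner ℝ (g l) v : ℝ))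
    (bK : EuclideanSpace ℝ (Fin 3) → Matrix (Fin 3) (Fin 3) ℝ)
    (hbK : ∀ x, bK x = ∑ l, (∏ m ∈ Finset.univ.erase l, lam m x) •
        Matrix.of (fun i j => g l i * g l j)) :
    (∀ x ∈ convexHull ℝ (Set.range p),
      (bK x)ᵀ = bK x ∧ ∀ w : Fin 3 → ℝ, 0 ≤ w ⬝ᵥ (bK x).mulVec w) ∧
    (∀ x ∈ interior (convexHull ℝ (Set.range p)),
      ∀ w : Fin 3 → ℝ, w ≠ 0 → 0 < w ⬝ᵥ (bK x).mulVec w) := by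
  classical
  -- lam is affine with gradient g
  have hlam_aff : ∀ l (y : EuclideanSpace ℝ (Fin 3)),
      lam l y = lam l 0 + (inner ℝ (g l) y : ℝ) := by
    intro l y
    have := hgrad l 0 y
    simpa using this
  -- lam of an affine combination
  have key : ∀ (c : Fin 4 → ℝ), (∑ m, c m) = 1 →
      ∀ l, lam l (∑ m, c m • p m) = c l := by
    intro c hc l
    rw [hlam_aff, inner_sum]
    have : ∀ m, (inner ℝ (g l) (c m • p m) : ℝ) = c m * inner ℝ (g l) (p m) := by
      intro m; rw [real_inner_smul_right]
    simp_rw [this]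
    calc lam l 0 + ∑ m, c m * (inner ℝ (g l) (p m) : ℝ)
        = ∑ m, c m * (lam l 0 + (inner ℝ (g l) (p m) : ℝ)) := by
          simp [Finset.mul_sum, mul_add, ← Finset.sum_mul, hc, Finset.sum_add_distrib]
      _ = ∑ m, c m * lam l (p m) := by
          refine Finset.sum_congr rfl fun m _ => ?_
          rw [← hlam_aff]
      _ = c l := by simp [hinterp]
  -- nonnegativity of lam on the hull
  have hnonneg : ∀ x ∈ convexHull ℝ (Set.range p), ∀ l, 0 ≤ lam l x := by
    intro x hx l
    have hsub : convexHull ℝ (Set.range p) ⊆ {y | 0 ≤ lam l y} := by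
      apply convexHull_min
      · rintro y ⟨m, rfl⟩
        simp only [Set.mem_setOf_eq, hinterp]
        split <;> norm_num
      · intro u hu v hv a b ha hb hab
        simp only [Set.mem_setOf_eq] at *
        have : lam l (a • u + b • v) = a * lam l u + b * lam l v := by
          rw [hlam_aff, inner_add_right, real_inner_smul_right, real_inner_smul_right,
            hlam_aff l u, hlam_aff l v]
          linear_combination (-(lam l 0)) * hab
        rw [this]
        positivity
    exact hsub hx
  -- positivity of lam in the interior
  have hgzero : ∀ l, g l ≠ 0 := by
    intro l hl
    have h1 : lam l (p l) = 1 := by simp [hinterp]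
    have h2 : lam l (p (l + 1)) = 0 := by
      rw [hinterp]
      have : l ≠ l + 1 := by
        intro h
        have := congrArg Fin.val h
        omega
      simp [this]
    rw [hlam_aff] at h1 h2
    rw [hl] at h1 h2
    simp at h1 h2
    rw [h2] at h1
    norm_num at h1
  have hpos : ∀ x ∈ interior (convexHull ℝ (Set.range p)), ∀ l, 0 < lam l x := by
    intro x hx l
    obtain ⟨ε, hε, hball⟩ := Metric.isOpen_iff.mp isOpen_interior x hx
    set v : EuclideanSpace ℝ (Fin 3) := -((ε / (2 * ‖g l‖)) • g l) with hv
    have hglnorm : 0 < ‖g l‖ := norm_pos_iff.mpr (hgzero l)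
    have hvnorm : ‖v‖ < ε := by
      rw [hv, norm_neg, norm_smul, Real.norm_eq_abs, abs_of_pos (by positivity)]
      rw [div_mul_eq_mul_div, mul_comm]
      rw [div_lt_iff₀ (by positivity)]
      nlinarith
    have hmem : x + v ∈ convexHull ℝ (Set.range p) := by
      apply interior_subset
      apply hball
      simp [Metric.mem_ball, dist_eq_norm, hvnorm]
    have h0 := hnonneg _ hmem l
    have : lam l (x + v) = lam l x - (ε / (2 * ‖g l‖)) * ‖g l‖ ^ 2 := by
      rw [hgrad, hv, inner_neg_right, real_inner_smul_right, real_inner_self_eq_norm_sq]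
      ring
    rw [this] at h0
    have : 0 < (ε / (2 * ‖g l‖)) * ‖g l‖ ^ 2 := by positivity
    linarith
  -- affine span is everything
  have hspan : affineSpan ℝ (Set.range p) = ⊤ := by
    rw [hp.affineSpan_eq_top_iff_card_eq_finrank_add_one]
    simp [finrank_euclideanSpace]
  -- every point is the lam-weighted combination of the p's
  have hrepr : ∀ y : EuclideanSpace ℝ (Fin 3), y = ∑ l, lam l y • p l := by
    intro y
    have hy : y ∈ affineSpan ℝ (Set.range p) := hspan ▸ AffineSubspace.mem_top ℝ _ y
    obtain ⟨c, hc, hyc⟩ := eq_affineCombination_of_mem_affineSpan_of_fintype hy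
    rw [Finset.univ.affineCombination_eq_linear_combination _ _ hc] at hyc
    have hcl : ∀ l, lam l y = c l := by
      intro l; rw [hyc]; exact key c hc l
    calc y = ∑ l, c l • p l := hyc
      _ = ∑ l, lam l y • p l := Finset.sum_congr rfl fun l _ => by rw [hcl l]
  -- the gradients jointly separate directions
  have hsep : ∀ v : EuclideanSpace ℝ (Fin 3),
      (∀ l, (inner ℝ (g l) v : ℝ) = 0) → v = 0 := by
    intro v hv
    have h1 : ∀ l, lam l (p 0 + v) = lam l (p 0) := by
      intro l; rw [hgrad, hv l, add_zero]
    have h2 : p 0 + v = p 0 := by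
      conv_lhs => rw [hrepr (p 0 + v)]
      conv_rhs => rw [hrepr (p 0)]
      exact Finset.sum_congr rfl fun l _ => by rw [h1 l]
    have := add_eq_left.mp h2
    exact this
  -- quadratic form formula
  have hquad : ∀ x (w : Fin 3 → ℝ), w ⬝ᵥ (bK x).mulVec w =
      ∑ l, (∏ m ∈ Finset.univ.erase l, lam m x) * (∑ i, g l i * w i) ^ 2 := by
    intro x w
    rw [hbK]
    simp only [dotProduct, Matrix.mulVec, Matrix.sum_apply, Matrix.smul_apply,
      Matrix.of_apply, smul_eq_mul, Fin.sum_univ_succ, Fin.sum_univ_zero]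
    ring
  constructor
  · intro x hx
    constructor
    · ext i j
      simp only [hbK, Matrix.transpose_apply, Matrix.sum_apply, Matrix.smul_apply,
        Matrix.of_apply, smul_eq_mul]
      exact Finset.sum_congr rfl fun l _ => by ring
    · intro w
      rw [hquad]
      apply Finset.sum_nonneg
      intro l _
      apply mul_nonneg
      · exact Finset.prod_nonneg fun m _ => hnonneg x hx m
      · positivity
  · intro x hx w hw
    rw [hquad]
    have hxh : x ∈ convexHull ℝ (Set.range p) := interior_subset hx
    have hterm : ∀ l ∈ Finset.univ,
        (0:ℝ) ≤ (∏ m ∈ Finset.univ.erase l, lam m x) * (∑ i, g l i * w i) ^ 2 := by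
      intro l _
      apply mul_nonneg
      · exact Finset.prod_nonneg fun m _ => hnonneg x hxh m
      · positivity
    have hex : ∃ l ∈ Finset.univ,
        (0:ℝ) < (∏ m ∈ Finset.univ.erase l, lam m x) * (∑ i, g l i * w i) ^ 2 := by
      by_contra hcon
      push_neg at hcon
      have hz : ∀ l, (∑ i, g l i * w i) = 0 := by
        intro l
        have h1 := hcon l (Finset.mem_univ l)
        have h2 := hterm l (Finset.mem_univ l)
        have heq : (∏ m ∈ Finset.univ.erase l, lam m x) * (∑ i, g l i * w i) ^ 2 = 0 :=
          le_antisymm h1 h2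
        have hprodpos : 0 < ∏ m ∈ Finset.univ.erase l, lam m x :=
          Finset.prod_pos fun m _ => hpos x hx m
        have := (mul_eq_zero.mp heq).resolve_left (ne_of_gt hprodpos)
        exact pow_eq_zero_iff (by norm_num) |>.mp this
      set v : EuclideanSpace ℝ (Fin 3) := (WithLp.equiv 2 (Fin 3 → ℝ)).symm w with hvdef
      have hv0 : v = 0 := by
        apply hsep
        intro l
        rw [PiLp.inner_apply]
        simpa [hvdef, mul_comm] using hz l
      apply hw
      funext i
      have := congrFun (congrArg (WithLp.equiv 2 (Fin 3 → ℝ)) hv0) i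
      simpa [hvdef] using this
    exact Finset.sum_pos' hterm hex
end
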